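/- Let G be a connected graph and F a finite set of automorphisms of G. Given a measure μ on G, define μ_F(v) = Σ_{σ∈F} μ(σ(v)). Then for every k ≥ 0, C_{μ_F}^k ≤ C_μ^k, and consequently C_{μ_F} ≤ C_μ. -/

import Mathlib

open scoped ENNReal

/-- The μ-measure (in `ℝ≥0∞`) of the closed ball of center `v` and natural radius `k`
in the path metric of `G`. -/
noncomputable def graphBallMeasure {V : Type*} (G : SimpleGraph V) (μ : V → ℝ≥0∞)
    (v : V) (k : ℕ) : ℝ≥0∞ :=
  ∑' w : {w : V // G.dist v w ≤ k}, μ w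

/-- The restricted doubling constant `C_μ^k = sup_v μ(B(v,2k+1))/μ(B(v,k))`. -/
noncomputable def restrictedDoubling {V : Type*} (G : SimpleGraph V) (μ : V → ℝ≥0∞)
    (k : ℕ) : ℝ≥0∞ :=
  ⨆ v : V, graphBallMeasure G μ v (2 * k + 1) / graphBallMeasure G μ v k

lemma iso_dist_le {V : Type*} {G : SimpleGraph V} (hG : G.Connected) (σ : G ≃g G) (v w : V) :
    G.dist (σ v) (σ w) ≤ G.dist v w := by
  obtain ⟨p, hp⟩ := (hG v w).exists_walk_length_eq_dist
  calc G.dist (σ v) (σ w) ≤ (p.map σ.toHom).length := SimpleGraph.dist_le _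
    _ = G.dist v w := by rw [SimpleGraph.Walk.length_map, hp]

lemma iso_dist {V : Type*} {G : SimpleGraph V} (hG : G.Connected) (σ : G ≃g G) (v w : V) :
    G.dist (σ v) (σ w) = G.dist v w := by
  refine le_antisymm (iso_dist_le hG σ v w) ?_
  simpa using iso_dist_le hG σ.symm (σ v) (σ w)

lemma ball_comp {V : Type*} {G : SimpleGraph V} (hG : G.Connected) (σ : G ≃g G)
    (μ : V → ℝ≥0∞) (v : V) (k : ℕ) :
    graphBallMeasure G (fun w => μ (σ w)) v k = graphBallMeasure G μ (σ v) k := by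
  unfold graphBallMeasure
  let e : {w : V // G.dist v w ≤ k} ≃ {u : V // G.dist (σ v) u ≤ k} :=
    { toFun := fun w => ⟨σ w, by rw [iso_dist hG]; exact w.2⟩
      invFun := fun u => ⟨σ.symm u, by
        have := iso_dist hG σ v (σ.symm u.1); simp at this; rw [← this]; simpa using u.2⟩
      left_inv := fun w => by simp
      right_inv := fun u => by simp }
  exact e.tsum_eq (fun u : {u : V // G.dist (σ v) u ≤ k} => μ u)

lemma ball_sum {V : Type*} {G : SimpleGraph V} (F : Finset (G ≃g G))
    (μ : V → ℝ≥0∞) (v : V) (k : ℕ) :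
    graphBallMeasure G (fun w => ∑ σ ∈ F, μ (σ w)) v k
      = ∑ σ ∈ F, graphBallMeasure G (fun w => μ (σ w)) v k := by
  unfold graphBallMeasure
  exact Summable.tsum_finsetSum (fun σ _ => ENNReal.summable)

lemma ball_pos {V : Type*} {G : SimpleGraph V} (μ : V → ℝ≥0∞) (hμ : ∀ v, 0 < μ v)
    (v : V) (k : ℕ) : 0 < graphBallMeasure G μ v k := by
  have : μ v ≤ graphBallMeasure G μ v k :=
    ENNReal.le_tsum (⟨v, by simp [SimpleGraph.dist_self]⟩ : {w : V // G.dist v w ≤ k})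
  exact lt_of_lt_of_le (hμ v) this

/-- for a finite set `F` of automorphisms of a connected graph `G` and
a measure μ, the symmetrized measure `μ_F(v) = Σ_{σ∈F} μ(σ v)` satisfies
`C_{μ_F}^k ≤ C_μ^k` for every `k`, and consequently `C_{μ_F} ≤ C_μ`. -/
theorem stmt_17 {V : Type*} (G : SimpleGraph V) (hG : G.Connected)
    (F : Finset (G ≃g G)) (hF : F.Nonempty)
    (μ : V → ℝ≥0∞) (hμ : ∀ v, 0 < μ v ∧ μ v ≠ ⊤) :
    (∀ k : ℕ,
      restrictedDoubling G (fun v => ∑ σ ∈ F, μ (σ v)) k ≤ restrictedDoubling G μ k) ∧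
    (⨆ k : ℕ, restrictedDoubling G (fun v => ∑ σ ∈ F, μ (σ v)) k) ≤
      ⨆ k : ℕ, restrictedDoubling G μ k := by
  have main : ∀ k : ℕ,
      restrictedDoubling G (fun v => ∑ σ ∈ F, μ (σ v)) k ≤ restrictedDoubling G μ k := by
    intro k
    set C := restrictedDoubling G μ k with hC
    refine iSup_le fun v => ?_
    have hA : graphBallMeasure G (fun w => ∑ σ ∈ F, μ (σ w)) v (2 * k + 1)
        = ∑ σ ∈ F, graphBallMeasure G μ (σ v) (2 * k + 1) := by
      rw [ball_sum]; exact Finset.sum_congr rfl fun σ _ => ball_comp hG σ μ v _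
    have hB : graphBallMeasure G (fun w => ∑ σ ∈ F, μ (σ w)) v k
        = ∑ σ ∈ F, graphBallMeasure G μ (σ v) k := by
      rw [ball_sum]; exact Finset.sum_congr rfl fun σ _ => ball_comp hG σ μ v _
    rw [hA, hB]
    by_cases htop : ∃ σ ∈ F, graphBallMeasure G μ (σ v) k = ⊤
    · rw [ENNReal.sum_eq_top.mpr htop, ENNReal.div_top]
      exact zero_le
    · push_neg at htop
      have hBne : (∑ σ ∈ F, graphBallMeasure G μ (σ v) k) ≠ ⊤ :=
        ENNReal.sum_ne_top.mpr htop
      have hBpos : (∑ σ ∈ F, graphBallMeasure G μ (σ v) k) ≠ 0 := by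
        obtain ⟨σ, hσ⟩ := hF
        refine fun h0 => absurd (Finset.sum_eq_zero_iff.mp h0 σ hσ) ?_
        exact (ball_pos μ (fun w => (hμ w).1) (σ v) k).ne'
      rw [ENNReal.div_le_iff hBpos hBne]
      calc ∑ σ ∈ F, graphBallMeasure G μ (σ v) (2 * k + 1)
          ≤ ∑ σ ∈ F, C * graphBallMeasure G μ (σ v) k := by
            refine Finset.sum_le_sum fun σ hσ => ?_
            have hb0 := (ball_pos (G := G) μ (fun w => (hμ w).1) (σ v) k).ne'
            rw [← ENNReal.div_le_iff hb0 (htop σ hσ)]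
            exact le_iSup (fun u => graphBallMeasure G μ u (2 * k + 1) / graphBallMeasure G μ u k) (σ v)
        _ = C * ∑ σ ∈ F, graphBallMeasure G μ (σ v) k := by rw [Finset.mul_sum]
  exact ⟨main, iSup_mono main⟩
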